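/- Let p and q be (not necessarily distinct) primes with p ≥ 5 and q ≥ 5, and suppose H(pq) = k. Then pq < 2·3^{k−2} + 1. -/

import Mathlib

/-- The height function: H(1) = 0 and H(n) = H(φ(n)) + 1 for n ≥ 2. -/
def H : ℕ → ℕ
  | 0 => 0
  | 1 => 0
  | n + 2 => H (Nat.totient (n + 2)) + 1
  decreasing_by exact Nat.totient_lt _ (by omega)

/-- The sum-of-heights function S(n) = ∑_{k=1}^n H(k). -/
def S (n : ℕ) : ℕ := ∑ k ∈ Finset.Icc 1 n, H k

lemma H_rec {n : ℕ} (h : 2 ≤ n) : H n = H n.totient + 1 := by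
  obtain ⟨m, rfl⟩ : ∃ m, n = m + 2 := ⟨n - 2, by omega⟩
  rw [H]

lemma H_pos {n : ℕ} (h : 2 ≤ n) : 1 ≤ H n := by rw [H_rec h]; omega

lemma totient_two_le {n : ℕ} (h : 3 ≤ n) : 2 ≤ n.totient := by
  have he := Nat.totient_even (by omega : 2 < n)
  have hp : 0 < n.totient := Nat.totient_pos.mpr (by omega)
  rcases he with ⟨r, hr⟩; omega

lemma H_ge_two {n : ℕ} (h : 3 ≤ n) : 2 ≤ H n := by
  rw [H_rec (by omega)]
  have := H_pos (totient_two_le h); omega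

def D (n : ℕ) : ℕ := if 2 ∣ n then H n else H n - 1

lemma D_two : D 2 = 1 := by
  have : H 2 = 1 := by rw [H_rec le_rfl]; norm_num [Nat.totient_two, H]
  simp [D, this]

lemma D_phi {n : ℕ} (h : 3 ≤ n) :
    D n = D n.totient + (if 2 ∣ n then 1 else 0) := by
  have he : 2 ∣ n.totient := (Nat.totient_even (by omega : 2 < n)).two_dvd
  have h1 := H_rec (show 2 ≤ n by omega)
  by_cases h2 : 2 ∣ n
  · simp [D, h2, he, h1]
  · have := H_ge_two h
    simp [D, h2, he]; omega

lemma D_pos {n : ℕ} (h : 2 ≤ n) : 1 ≤ D n := by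
  by_cases h2 : 2 ∣ n
  · simpa [D, h2] using H_pos h
  · have := H_ge_two (by omega : 3 ≤ n)
    simp [D, h2]; omega

lemma D_two_mul {n : ℕ} (hn : 3 ≤ n) (h2 : ¬ 2 ∣ n) : D (2 * n) = 1 + D n := by
  have hco : Nat.Coprime 2 n := (Nat.Prime.coprime_iff_not_dvd Nat.prime_two).mpr h2
  have hphi : (2 * n).totient = n.totient := by
    rw [Nat.totient_mul hco, Nat.totient_two, one_mul]
  have e1 := D_phi (show 3 ≤ 2 * n by omega)
  have e2 := D_phi hn
  rw [hphi] at e1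
  simp only [h2, if_false] at e2
  simp only [show (2 : ℕ) ∣ 2 * n from ⟨n, rfl⟩, if_true] at e1
  omega

lemma two_dvd_mul {m n : ℕ} : 2 ∣ m * n ↔ 2 ∣ m ∨ 2 ∣ n :=
  Nat.Prime.dvd_mul Nat.prime_two

theorem D_add : ∀ N m n : ℕ, 2 ≤ m → 2 ≤ n → m * n ≤ N → D (m * n) = D m + D n := by
  intro N
  induction N with
  | zero =>
    intro m n hm hn h
    have : 2 * 2 ≤ m * n := Nat.mul_le_mul hm hn
    omega
  | succ N ih =>
    intro m n hm hn hmn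
    by_cases hco : Nat.Coprime m n
    · rcases eq_or_lt_of_le hm with hm2 | hm3
      · -- m = 2, hence n odd ≥ 3
        obtain rfl := hm2.symm
        have h2n : ¬ 2 ∣ n := fun hd => by
          have := Nat.dvd_gcd (dvd_refl 2) hd
          rw [hco] at this; omega
        have hn3 : 3 ≤ n := by
          have : n ≠ 2 := by rintro rfl; exact h2n ⟨1, rfl⟩
          omega
        rw [D_two_mul hn3 h2n, D_two]
      · rcases eq_or_lt_of_le hn with hn2 | hn3
        · obtain rfl := hn2.symm
          have h2m : ¬ 2 ∣ m := fun hd => by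
            have := Nat.dvd_gcd hd (dvd_refl 2)
            rw [hco] at this; omega
          rw [mul_comm, D_two_mul hm3 h2m, D_two]; omega
        · -- m, n ≥ 3 coprime
          have hphi : (m * n).totient = m.totient * n.totient := Nat.totient_mul hco
          have hpm : 2 ≤ m.totient := totient_two_le hm3
          have hpn : 2 ≤ n.totient := totient_two_le hn3
          have hlt : m.totient * n.totient ≤ N := by
            have h1 : m.totient < m := Nat.totient_lt m (by omega)
            have h2 : n.totient ≤ n := Nat.totient_le n
            have : m.totient * n.totient < m * n :=
              Nat.mul_lt_mul_of_lt_of_le h1 h2 (by omega)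
            omega
          have hIH := ih m.totient n.totient hpm hpn hlt
          have e0 := D_phi (show 3 ≤ m * n by nlinarith)
          rw [hphi, hIH] at e0
          have e1 := D_phi hm3
          have e2 := D_phi hn3
          have hpar : ¬ (2 ∣ m ∧ 2 ∣ n) := fun ⟨a, b⟩ => by
            have := Nat.dvd_gcd a b; rw [hco] at this; omega
          by_cases d1 : 2 ∣ m <;> by_cases d2 : 2 ∣ n
          · exact absurd ⟨d1, d2⟩ hpar
          · rw [if_pos (two_dvd_mul.mpr (Or.inl d1))] at e0
            rw [if_pos d1] at e1; rw [if_neg d2] at e2; omega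
          · rw [if_pos (two_dvd_mul.mpr (Or.inr d2))] at e0
            rw [if_neg d1] at e1; rw [if_pos d2] at e2; omega
          · rw [if_neg (fun h => by rcases two_dvd_mul.mp h with h | h
                                    exacts [d1 h, d2 h])] at e0
            rw [if_neg d1] at e1; rw [if_neg d2] at e2; omega
    · -- non-coprime: common prime p
      have hg1 : Nat.gcd m n ≠ 1 := hco
      obtain ⟨p, hp, hpg⟩ := Nat.exists_prime_and_dvd hg1
      have hpm : p ∣ m := hpg.trans (Nat.gcd_dvd_left m n)
      have hpn : p ∣ n := hpg.trans (Nat.gcd_dvd_right m n)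
      have hp2 : 2 ≤ p := hp.two_le
      obtain ⟨m', hmeq⟩ := hpm
      rcases Nat.lt_or_ge m' 2 with hm'1 | hm'2
      · -- m = p prime
        have hm'eq : m' = 1 := by
          rcases Nat.eq_zero_or_pos m' with h | h
          · subst h; omega
          · omega
        have hmp : m = p := by rw [hmeq, hm'eq, mul_one]
        subst hmp
        rcases eq_or_lt_of_le hn with hn2 | hn3
        · -- n = 2, so p = 2, m*n = 4
          obtain rfl := hn2.symm
          have hp2' : m = 2 := ((Nat.prime_dvd_prime_iff_eq hp Nat.prime_two).mp hpn)
          subst hp2'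
          have h4 : (2 * 2 : ℕ).totient = 2 := by decide
          have e := D_phi (show 3 ≤ 2 * 2 by norm_num)
          rw [h4] at e
          simp only [show (2:ℕ) ∣ 2 * 2 from ⟨2, rfl⟩, if_true] at e
          rw [e, D_two]
        · have hphi : (m * n).totient = m * n.totient :=
            Nat.totient_mul_of_prime_of_dvd hp hpn
          have hpt2 : 2 ≤ n.totient := totient_two_le hn3
          have hle : m * n.totient ≤ N := by
            have : m * n.totient < m * n :=
              Nat.mul_lt_mul_of_le_of_lt le_rfl (Nat.totient_lt n (by omega)) (by omega)
            omega
          have hIH := ih m n.totient hm hpt2 hle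
          have e0 := D_phi (show 3 ≤ m * n by nlinarith)
          rw [hphi, hIH] at e0
          have e2 := D_phi hn3
          have hpar : (2 ∣ m * n) ↔ (2 ∣ n) := by
            constructor
            · intro h; rcases two_dvd_mul.mp h with h | h
              · exact dvd_trans (by rw [(Nat.prime_dvd_prime_iff_eq Nat.prime_two hp).mp h]) hpn
              · exact h
            · intro h; exact two_dvd_mul.mpr (Or.inr h)
          by_cases d2 : 2 ∣ n
          · rw [if_pos d2] at e2; rw [if_pos (hpar.mpr d2)] at e0; omega
          · rw [if_neg d2] at e2; rw [if_neg (fun h => d2 (hpar.mp h))] at e0; omega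
      · -- m = p * m', m' ≥ 2
        have hmn3 : 3 ≤ m' * n := by nlinarith
        have hpdvd : p ∣ m' * n := Dvd.dvd.mul_left hpn m'
        have heq : p * (m' * n) = m * n := by rw [hmeq, mul_assoc]
        have hphi : (m * n).totient = p * (m' * n).totient := by
          rw [hmeq, mul_assoc, Nat.totient_mul_of_prime_of_dvd hp hpdvd]
        have hpt2 : 2 ≤ (m' * n).totient := totient_two_le hmn3
        have hle1 : p * (m' * n).totient ≤ N := by
          have h1 : (m' * n).totient < m' * n := Nat.totient_lt _ (by omega)
          have : p * (m' * n).totient < p * (m' * n) :=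
            Nat.mul_lt_mul_of_le_of_lt le_rfl h1 (by omega)
          rw [heq] at this
          omega
        have hIH1 := ih p ((m' * n).totient) hp2 hpt2 hle1
        have hle2 : m' * n ≤ N := by
          have h2 : 2 * (m' * n) ≤ p * (m' * n) :=
            Nat.mul_le_mul_right _ hp2
          rw [heq] at h2
          omega
        have hIH2 := ih m' n hm'2 hn hle2
        have hle3 : p * m' ≤ N := by
          have h2 : (p * m') * 2 ≤ (p * m') * n := Nat.mul_le_mul_left _ hn
          rw [← hmeq] at h2 ⊢
          omega
        have hIH3 := ih p m' hp2 hm'2 hle3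
        have e0 := D_phi (show 3 ≤ m * n by nlinarith)
        rw [hphi, hIH1] at e0
        have e2 := D_phi hmn3
        have hpar : (2 ∣ m * n) ↔ (2 ∣ m' * n) := by
          rw [← heq]
          constructor
          · intro h; rcases two_dvd_mul.mp h with h | h
            · refine two_dvd_mul.mpr (Or.inr ?_)
              rw [(Nat.prime_dvd_prime_iff_eq Nat.prime_two hp).mp h]
              exact hpn
            · exact h
          · intro h; exact two_dvd_mul.mpr (Or.inr h)
        rw [← hmeq] at hIH3
        by_cases dd : 2 ∣ m' * n
        · rw [if_pos dd] at e2; rw [if_pos (hpar.mpr dd)] at e0; omega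
        · rw [if_neg dd] at e2; rw [if_neg (fun h => dd (hpar.mp h))] at e0; omega

theorem D_bound : ∀ n : ℕ, 2 ≤ n →
    (2 ∣ n → 3 * n ≤ 2 * 3 ^ D n) ∧ (¬ 2 ∣ n → n ≤ 3 ^ D n) := by
  intro n
  induction n using Nat.strong_induction_on with
  | _ n ih =>
  intro hn
  by_cases hp : n.Prime
  · by_cases h2 : n = 2
    · subst h2
      rw [D_two]
      constructor
      · intro _; norm_num
      · intro h; exact absurd ⟨1, rfl⟩ h
    · have hn3 : 3 ≤ n := by
        have := hp.two_le; omega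
      have hne : ¬ 2 ∣ n := by
        intro h
        exact h2 ((Nat.prime_dvd_prime_iff_eq Nat.prime_two hp).mp h).symm
      have h2d : 2 ∣ n - 1 := by omega
      have hH : H n = H (n - 1) + 1 := by
        rw [H_rec (by omega), Nat.totient_prime hp]
      have hD : D n = D (n - 1) := by
        simp only [D, hne, h2d, if_true, if_false]
        omega
      have hIH := (ih (n - 1) (by omega) (by omega)).1 h2d
      have hD1 : 1 ≤ D (n - 1) := D_pos (by omega)
      have h3 : 3 ≤ 3 ^ D (n - 1) := by
        calc (3:ℕ) = 3 ^ 1 := by norm_num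
        _ ≤ 3 ^ D (n - 1) := Nat.pow_le_pow_right (by norm_num) hD1
      constructor
      · intro h; exact absurd h hne
      · intro _; rw [hD]; omega
  · -- composite
    have hn1 : n ≠ 1 := by omega
    have hp1 : (n.minFac).Prime := Nat.minFac_prime hn1
    have hab : n.minFac * (n / n.minFac) = n := Nat.mul_div_cancel' (Nat.minFac_dvd n)
    set a := n.minFac with ha_def
    set b := n / n.minFac with hb_def
    have ha2 : 2 ≤ a := hp1.two_le
    have hb2 : 2 ≤ b := by
      rcases Nat.lt_or_ge b 2 with h | h
      · interval_cases b
        · omega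
        · rw [mul_one] at hab; exact absurd (hab ▸ hp1) hp
      · exact h
    have hab2 : a * 2 ≤ a * b := Nat.mul_le_mul_left _ hb2
    have hab2' : 2 * b ≤ a * b := Nat.mul_le_mul_right _ ha2
    have ha_lt : a < n := by omega
    have hb_lt : b < n := by omega
    have hD : D n = D a + D b := by
      conv_lhs => rw [← hab]
      exact D_add (a * b) a b ha2 hb2 le_rfl
    have IHa := ih a ha_lt ha2
    have IHb := ih b hb_lt hb2
    have hPQ : 3 ^ D n = 3 ^ D a * 3 ^ D b := by rw [hD, pow_add]
    constructor
    · intro h2n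
      by_cases da : 2 ∣ a <;> by_cases db : 2 ∣ b
      · have h1 := IHa.1 da
        have h2 := IHb.1 db
        have hmul : (3 * a) * (3 * b) ≤ (2 * 3 ^ D a) * (2 * 3 ^ D b) :=
          Nat.mul_le_mul h1 h2
        rw [hPQ, ← hab]
        nlinarith [hmul]
      · have h1 := IHa.1 da
        have h2 := IHb.2 db
        have hmul : (3 * a) * b ≤ (2 * 3 ^ D a) * 3 ^ D b :=
          Nat.mul_le_mul h1 h2
        rw [hPQ, ← hab]
        nlinarith [hmul]
      · have h1 := IHa.2 da
        have h2 := IHb.1 db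
        have hmul : a * (3 * b) ≤ 3 ^ D a * (2 * 3 ^ D b) :=
          Nat.mul_le_mul h1 h2
        rw [hPQ, ← hab]
        nlinarith [hmul]
      · exfalso
        rw [← hab] at h2n
        rcases two_dvd_mul.mp h2n with h | h
        exacts [da h, db h]
    · intro h2n
      have da : ¬ 2 ∣ a := fun h => h2n (by rw [← hab]; exact two_dvd_mul.mpr (Or.inl h))
      have db : ¬ 2 ∣ b := fun h => h2n (by rw [← hab]; exact two_dvd_mul.mpr (Or.inr h))
      have hmul : a * b ≤ 3 ^ D a * 3 ^ D b := Nat.mul_le_mul (IHa.2 da) (IHb.2 db)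
      rw [hPQ, ← hab]
      exact hmul

lemma D_prime_odd {p : ℕ} (hp : p.Prime) (h5 : 5 ≤ p) :
    3 * p ≤ 2 * 3 ^ D p + 3 ∧ 2 ≤ D p := by
  have hne : ¬ 2 ∣ p := by
    intro h
    have := (Nat.prime_dvd_prime_iff_eq Nat.prime_two hp).mp h
    omega
  have h2d : 2 ∣ p - 1 := by omega
  have hH : H p = H (p - 1) + 1 := by
    rw [H_rec (by omega), Nat.totient_prime hp]
  have hD : D p = D (p - 1) := by
    simp only [D, hne, h2d, if_true, if_false]
    omega
  have hDp1 : D (p - 1) = H (p - 1) := by simp [D, h2d]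
  constructor
  · have := (D_bound (p - 1) (by omega)).1 h2d
    rw [hD]; omega
  · rw [hD, hDp1]
    exact H_ge_two (by omega)

theorem pq_bound (p q k : ℕ) (hp : p.Prime) (hq : q.Prime)
    (hp5 : 5 ≤ p) (hq5 : 5 ≤ q) (hH : H (p * q) = k) :
    p * q < 2 * 3 ^ (k - 2) + 1 := by
  have hopp : ¬ 2 ∣ p := by
    intro h
    have := (Nat.prime_dvd_prime_iff_eq Nat.prime_two hp).mp h
    omega
  have hopq : ¬ 2 ∣ q := by
    intro h
    have := (Nat.prime_dvd_prime_iff_eq Nat.prime_two hq).mp h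
    omega
  have hpqodd : ¬ 2 ∣ p * q := by
    intro h
    rcases two_dvd_mul.mp h with h | h
    exacts [hopp h, hopq h]
  have hpq25 : 25 ≤ p * q := Nat.mul_le_mul hp5 hq5
  have hDpq : D (p * q) = D p + D q :=
    D_add (p * q) p q (by omega) (by omega) le_rfl
  have hHpq : 2 ≤ H (p * q) := H_ge_two (by omega)
  have hDH : D (p * q) = H (p * q) - 1 := by simp [D, hpqodd]
  obtain ⟨hbp, hxp⟩ := D_prime_odd hp hp5
  obtain ⟨hbq, hxq⟩ := D_prime_odd hq hq5
  have hk : k = D p + D q + 1 := by omega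
  set A := 3 ^ (D p - 2) with hA_def
  set B := 3 ^ (D q - 2) with hB_def
  have hA1 : 1 ≤ A := Nat.one_le_pow _ _ (by norm_num)
  have hB1 : 1 ≤ B := Nat.one_le_pow _ _ (by norm_num)
  have hpow1 : 3 ^ D p = 9 * A := by
    rw [hA_def, show (9:ℕ) = 3 ^ 2 from rfl, ← pow_add]
    congr 1
    omega
  have hpow2 : 3 ^ D q = 9 * B := by
    rw [hB_def, show (9:ℕ) = 3 ^ 2 from rfl, ← pow_add]
    congr 1
    omega
  have hpowk : 3 ^ (k - 2) = 27 * (A * B) := by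
    rw [hA_def, hB_def, show (27:ℕ) = 3 ^ 3 from rfl, ← pow_add, ← pow_add]
    congr 1
    omega
  rw [hpow1] at hbp
  rw [hpow2] at hbq
  have hmul : (3 * p) * (3 * q) ≤ (2 * (9 * A) + 3) * (2 * (9 * B) + 3) :=
    Nat.mul_le_mul hbp hbq
  have h1 : A ≤ A * B := Nat.le_mul_of_pos_right A (by omega)
  have h2 : B ≤ A * B := Nat.le_mul_of_pos_left B (by omega)
  have h3 : 1 ≤ A * B := Nat.mul_le_mul hA1 hB1
  rw [hpowk]
  nlinarith [hmul, h1, h2, h3]
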